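/- Let F = (Args, Atts) be an AAF, η ∉ Args, and B ⊆ Args. Let F↾(Args\B) = (Args \ B, Atts ∩ ((Args\B) × (Args\B))) be the induced sub-framework obtained by deleting the arguments in B, and let F_{η,B} = (Args ∪ {η}, Atts ∪ {(η,b) : b ∈ B}), in which η attacks exactly the arguments of B and is attacked by no argument. Then for every S ⊆ Args \ B: S is stable in F↾(Args\B) if and only if S ∪ {η} is stable in F_{η,B}. -/

import Mathlib

variable {α : Type*}

def conflictFree (Atts : Set (α × α)) (S : Set α) : Prop :=
  ∀ a ∈ S, ∀ b ∈ S, (a, b) ∉ Atts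

def stable (Args : Set α) (Atts : Set (α × α)) (S : Set α) : Prop :=
  S ⊆ Args ∧ conflictFree Atts S ∧ ∀ a ∈ Args \ S, ∃ b ∈ S, (b, a) ∈ Atts

theorem stmt_9 (Args : Set α) (Atts : Set (α × α))
    (hAtts : Atts ⊆ Args ×ˢ Args) (η : α) (hη : η ∉ Args)
    (B : Set α) (hB : B ⊆ Args)
    (S : Set α) (hS : S ⊆ Args \ B) :
    stable (Args \ B) (Atts ∩ ((Args \ B) ×ˢ (Args \ B))) S ↔
      stable (Args ∪ {η}) (Atts ∪ {q : α × α | ∃ b ∈ B, q = (η, b)}) (S ∪ {η}) := by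
  have hηB : η ∉ B := fun h => hη (hB h)
  have hηA : ∀ x, (η, x) ∉ Atts := fun x h => hη (hAtts h).1
  have hAη : ∀ x, (x, η) ∉ Atts := fun x h => hη (hAtts h).2
  constructor
  · rintro ⟨h1, h2, h3⟩
    refine ⟨?_, ?_, ?_⟩
    · rintro x (hx | hx)
      · exact Or.inl (hS hx).1
      · exact Or.inr hx
    · rintro a (ha | ha) b (hb | hb) (hatt | hatt) <;>
        simp -failIfUnchanged only [Set.mem_singleton_iff] at *
      · exact h2 a ha b hb ⟨hatt, hS ha, hS hb⟩
      · obtain ⟨c, hc, heq⟩ := hatt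
        cases heq; exact hη (hS ha).1
      · subst hb; exact hAη a hatt
      · subst hb
        obtain ⟨c, hc, heq⟩ := hatt
        cases heq; exact hη (hS ha).1
      · subst ha; exact hηA b hatt
      · subst ha
        obtain ⟨c, hc, heq⟩ := hatt
        cases heq; exact (hS hb).2 hc
      · subst ha; subst hb; exact absurd hatt (hAη _)
      · subst ha; subst hb
        obtain ⟨c, hc, heq⟩ := hatt
        cases heq; exact hηB hc
    · rintro a ⟨ha | ha, hna⟩
      · by_cases haB : a ∈ B
        · exact ⟨η, Or.inr rfl, Or.inr ⟨a, haB, rfl⟩⟩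
        · obtain ⟨b, hb, hbatt⟩ := h3 a ⟨⟨ha, haB⟩, fun h => hna (Or.inl h)⟩
          exact ⟨b, Or.inl hb, Or.inl hbatt.1⟩
      · exact absurd (Or.inr ha) hna
  · rintro ⟨h1, h2, h3⟩
    refine ⟨hS, ?_, ?_⟩
    · intro a ha b hb hatt
      exact h2 a (Or.inl ha) b (Or.inl hb) (Or.inl hatt.1)
    · rintro a ⟨⟨haA, haB⟩, hna⟩
      obtain ⟨b, hb | hb, hbatt | hbatt⟩ :=
        h3 a ⟨Or.inl haA, fun h => h.elim hna (fun h => hη (h ▸ haA))⟩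
      · exact ⟨b, hb, hbatt, ⟨(hS hb).1, (hS hb).2⟩, haA, haB⟩
      · obtain ⟨c, hc, heq⟩ := hbatt
        cases heq; exact absurd hc haB
      · exact absurd (hb ▸ hbatt) (hηA a)
      · obtain ⟨c, hc, heq⟩ := hbatt
        cases heq; exact absurd hc haB
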